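/- Let C : ℝ → ℝ be a doubly convex production cost function: C(0) = 0, C is differentiable on [0,∞) with derivative c satisfying c(0) = 0, and c is nonnegative, nondecreasing, and convex on [0,∞). Then for every y ≥ 0, C(y) ≤ (1/2)·c(y)·y. -/

import Mathlib

/-- A doubly convex production cost function `C` with derivative `c`
satisfies `C(y) ≤ (1/2)·c(y)·y` for every `y ≥ 0`. -/
theorem doubly_convex_cost_bound
    (C c : ℝ → ℝ)
    (hC0 : C 0 = 0)
    (hderiv : ∀ x, 0 ≤ x → HasDerivAt C (c x) x)
    (hc0 : c 0 = 0)
    (hc_nonneg : ∀ x, 0 ≤ x → 0 ≤ c x)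
    (hc_mono : ∀ x y, 0 ≤ x → x ≤ y → c x ≤ c y)
    (hc_convex : ConvexOn ℝ (Set.Ici (0 : ℝ)) c) :
    ∀ y, 0 ≤ y → C y ≤ (1 / 2) * c y * y := by
  intro y hy
  rcases eq_or_lt_of_le hy with rfl | hy'
  · simp [hC0]
  -- FTC
  have huIcc : Set.uIcc (0:ℝ) y = Set.Icc 0 y := Set.uIcc_of_le hy
  have hint : IntervalIntegrable c MeasureTheory.volume 0 y := by
    apply MonotoneOn.intervalIntegrable
    rw [huIcc]
    intro a ha b hb hab
    exact hc_mono a b ha.1 hab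
  have hftc : ∫ x in (0:ℝ)..y, c x = C y - C 0 := by
    apply intervalIntegral.integral_eq_sub_of_hasDerivAt
    · intro x hx
      rw [huIcc] at hx
      exact hderiv x hx.1
    · exact hint
  -- pointwise bound : c x ≤ x * (c y / y) on [0,y]
  have hbound : ∀ x ∈ Set.Icc (0:ℝ) y, c x ≤ x * (c y / y) := by
    intro x hx
    have h1 : (1 - x / y) • (0:ℝ) + (x / y) • y = x := by
      field_simp
      rw [smul_zero, zero_add, smul_eq_mul, div_mul_cancel₀ x hy'.ne']
    have hxy1 : x / y ≤ 1 := (div_le_one hy').mpr hx.2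
    have h2 := hc_convex.2 (Set.self_mem_Ici) (Set.mem_Ici.mpr hy)
      (show (0:ℝ) ≤ 1 - x / y by linarith)
      (div_nonneg hx.1 hy)
      (by ring)
    rw [h1] at h2
    simp only [smul_eq_mul, hc0, mul_zero, zero_add] at h2
    calc c x ≤ x / y * c y := h2
      _ = x * (c y / y) := by ring
  -- integral comparison
  have hint2 : IntervalIntegrable (fun x => x * (c y / y)) MeasureTheory.volume 0 y :=
    (continuous_id.mul continuous_const).intervalIntegrable _ _
  have hmono : ∫ x in (0:ℝ)..y, c x ≤ ∫ x in (0:ℝ)..y, x * (c y / y) := by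
    apply intervalIntegral.integral_mono_on hy hint hint2
    exact hbound
  have hval : ∫ x in (0:ℝ)..y, x * (c y / y) = (1/2) * c y * y := by
    rw [intervalIntegral.integral_mul_const, integral_id]
    field_simp
    ring
  rw [hftc, hC0, sub_zero] at hmono
  rw [hval] at hmono
  exact hmono
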